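/- Let J satisfy (H1)-(H2) and the moment condition ∫ J(z)|z|^{N+1} dz < ∞ (H5), and let φ : ℝ^N → ℝ be continuous, periodic, bounded, with inf φ > 0. For τ > 0 define w(x) = φ(x)/(1 + τ|x|^{N+1}). Then there exist τ₁ > 0 and R₀ > 1 such that for all 0 < τ ≤ τ₁ and all |x| ≥ R₀: τ ∫_{ℝ^N} J(z) [ (|x|^{N+1} − |x+z|^{N+1}) / (1 + τ|x+z|^{N+1}) ] (φ(x+z)/φ(x)) dz ≤ δ, for any prescribed δ > 0. -/

import Mathlib

open MeasureTheory Real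

noncomputable section

lemma pow_sub_pow_le_aux (n : ℕ) : ∀ a b : ℝ, 0 ≤ b → b ≤ a →
    a^(n+1) - b^(n+1) ≤ (n+1) * (a-b) * a^n := by
  induction n with
  | zero => intro a b hb hba; simp
  | succ n ih =>
    intro a b hb hba
    have h1 := ih a b hb hba
    have h2 : b^(n+1) ≤ a^(n+1) := pow_le_pow_left₀ hb hba _
    have ha : 0 ≤ a := le_trans hb hba
    have : a^(n+2) - b^(n+2) = a*(a^(n+1) - b^(n+1)) + b^(n+1)*(a-b) := by ring
    rw [this]
    have h3 : a*(a^(n+1)-b^(n+1)) ≤ a*((n+1)*(a-b)*a^n) :=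
      mul_le_mul_of_nonneg_left h1 ha
    have h4 : b^(n+1)*(a-b) ≤ a^(n+1)*(a-b) :=
      mul_le_mul_of_nonneg_right h2 (by linarith)
    have : a*((n+1)*(a-b)*a^n) = ((n:ℝ)+1)*(a-b)*a^(n+1) := by ring
    push_cast
    nlinarith [pow_nonneg ha (n+1)]

lemma key_ineq (n : ℕ) (τ a b r : ℝ) (hτ : 0 < τ) (hr : 0 ≤ r) (hb : 0 ≤ b)
    (htri : a - r ≤ b) (ha : 1 ≤ a) :
    τ * ((a^(n+1) - b^(n+1)) / (1 + τ * b^(n+1))) ≤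
      τ * 2^(n+1) * r^(n+1) + 2^(n+1) * (n+1) * r / a := by
  have ha0 : (0:ℝ) < a := lt_of_lt_of_le one_pos ha
  have hden : (0:ℝ) < 1 + τ * b^(n+1) := by positivity
  have hrhs2 : (0:ℝ) ≤ 2^(n+1) * (n+1) * r / a := by positivity
  have hrhs1 : (0:ℝ) ≤ τ * 2^(n+1) * r^(n+1) := by positivity
  rcases le_or_gt (a^(n+1) - b^(n+1)) 0 with hnum | hnum
  · have : τ * ((a^(n+1) - b^(n+1)) / (1 + τ * b^(n+1))) ≤ 0 :=
      mul_nonpos_of_nonneg_of_nonpos hτ.le (div_nonpos_of_nonpos_of_nonneg hnum hden.le)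
    linarith
  · rcases le_or_gt a (2*r) with hcase | hcase
    · have h1 : (a^(n+1) - b^(n+1)) / (1 + τ * b^(n+1)) ≤ a^(n+1) - b^(n+1) :=
        div_le_self hnum.le (by nlinarith [pow_nonneg hb (n+1)])
      have h2 : a^(n+1) ≤ (2*r)^(n+1) := pow_le_pow_left₀ ha0.le hcase _
      have h3 : (2*r)^(n+1) = 2^(n+1) * r^(n+1) := mul_pow 2 r (n+1)
      have hbn : 0 ≤ b^(n+1) := pow_nonneg hb _
      have : τ * ((a^(n+1) - b^(n+1)) / (1 + τ * b^(n+1))) ≤ τ * (2^(n+1)*r^(n+1)) := by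
        have := mul_le_mul_of_nonneg_left h1 hτ.le
        nlinarith
      linarith
    · have hs : a/2 < a - r := by linarith
      have hs0 : (0:ℝ) < a - r := by linarith
      have hbig : (a/2)^(n+1) ≤ b^(n+1) :=
        pow_le_pow_left₀ (by linarith) (by linarith) _
      have hd2 : (0:ℝ) < τ * (a/2)^(n+1) := by positivity
      have hdle : τ * (a/2)^(n+1) ≤ 1 + τ * b^(n+1) := by nlinarith
      have h1 : (a^(n+1) - b^(n+1)) / (1 + τ * b^(n+1)) ≤
          (a^(n+1) - b^(n+1)) / (τ * (a/2)^(n+1)) :=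
        div_le_div_of_nonneg_left hnum.le hd2 hdle
      have hnum2 : a^(n+1) - b^(n+1) ≤ (n+1) * r * a^n := by
        have hbn : (a-r)^(n+1) ≤ b^(n+1) := pow_le_pow_left₀ hs0.le htri _
        have := pow_sub_pow_le_aux n a (a-r) hs0.le (by linarith)
        push_cast at this ⊢
        nlinarith
      have han : (0:ℝ) < a^(n+1) := pow_pos ha0 _
      have key : τ * ((a^(n+1) - b^(n+1)) / (τ * (a/2)^(n+1))) ≤ 2^(n+1) * (n+1) * r / a := by
        have heq : τ * ((a^(n+1) - b^(n+1)) / (τ * (a/2)^(n+1))) =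
            (a^(n+1) - b^(n+1)) * 2^(n+1) / a^(n+1) := by
          rw [div_pow]
          field_simp
        rw [heq, div_le_div_iff₀ han ha0]
        have hpow : a^(n+1) = a * a^n := by ring
        calc (a^(n+1) - b^(n+1)) * 2^(n+1) * a ≤ ((n+1) * r * a^n) * 2^(n+1) * a := by
              have h2n : (0:ℝ) ≤ (2:ℝ)^(n+1) := by positivity
              exact mul_le_mul_of_nonneg_right (mul_le_mul_of_nonneg_right hnum2 h2n) ha0.le
          _ = 2^(n+1) * (n+1) * r * a^(n+1) := by rw [hpow]; ring
      have := mul_le_mul_of_nonneg_left h1 hτ.le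
      linarith

theorem stmt_18 (N : ℕ)
    (J φ : EuclideanSpace ℝ (Fin N) → ℝ)
    (hJc : Continuous J) (hJpos : ∀ z, 0 ≤ J z) (hJsym : ∀ z, J (-z) = J z)
    (hJint : Integrable J) (hJmass : ∫ z, J z = 1) (hJ0 : 0 < J 0)
    (hJmom : Integrable (fun z => J z * ‖z‖ ^ (N + 1)))
    (hφc : Continuous φ)
    (hφper : ∃ L > (0:ℝ), ∀ (x v : EuclideanSpace ℝ (Fin N)),
      (∀ i : Fin N, ∃ k : ℤ, v i = (k : ℝ) * L) → φ (x + v) = φ x)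
    (hφbd : ∃ C, ∀ x, φ x ≤ C)
    (hφinf : ∃ c > (0:ℝ), ∀ x, c ≤ φ x)
    (δ : ℝ) (hδ : 0 < δ) :
    ∃ τ₁ > (0:ℝ), ∃ R₀ > (1:ℝ), ∀ τ : ℝ, 0 < τ → τ ≤ τ₁ →
      ∀ x : EuclideanSpace ℝ (Fin N), R₀ ≤ ‖x‖ →
        τ * ∫ z, J z *
            ((‖x‖ ^ (N + 1) - ‖x + z‖ ^ (N + 1)) / (1 + τ * ‖x + z‖ ^ (N + 1)))
            * (φ (x + z) / φ x)
          ≤ δ := by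
  obtain ⟨Cb, hCb⟩ := hφbd
  obtain ⟨c, hc0, hcφ⟩ := hφinf
  have hCb0 : (0:ℝ) < Cb := lt_of_lt_of_le hc0 (le_trans (hcφ 0) (hCb 0))
  set M : ℝ := Cb / c with hMdef
  have hM0 : 0 < M := div_pos hCb0 hc0
  set P : ℝ := 2 ^ (N+1) with hPdef
  have hP0 : (0:ℝ) < P := by positivity
  -- Integrability of J z * ‖z‖
  have hB : Integrable (fun z : EuclideanSpace ℝ (Fin N) => J z * ‖z‖) := by
    apply (hJint.add hJmom).mono' (hJc.mul continuous_norm).aestronglyMeasurable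
    filter_upwards with z
    have h1 : 0 ≤ J z := hJpos z
    have h2 : ‖z‖ ≤ 1 + ‖z‖ ^ (N+1) := by
      rcases le_total ‖z‖ 1 with h | h
      · have : (0:ℝ) ≤ ‖z‖ ^ (N+1) := by positivity
        linarith
      · have h3 : ‖z‖ ^ 1 ≤ ‖z‖ ^ (N+1) := pow_le_pow_right₀ h (by omega)
        rw [pow_one] at h3
        linarith
    rw [Real.norm_eq_abs, abs_of_nonneg (by simp only [Pi.mul_apply]; positivity)]
    simp only [Pi.add_apply, Pi.mul_apply]
    nlinarith [norm_nonneg z, pow_nonneg (norm_nonneg z) (N+1)]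
  set A : ℝ := ∫ z, J z * ‖z‖ ^ (N+1) with hAdef
  set B : ℝ := ∫ z, J z * ‖z‖ with hBdef
  have hA0 : 0 ≤ A := integral_nonneg fun z => mul_nonneg (hJpos z) (by positivity)
  have hB0 : 0 ≤ B := integral_nonneg fun z => mul_nonneg (hJpos z) (norm_nonneg z)
  refine ⟨δ / (M * P * (A+1) * 2), by positivity,
    max 2 (M * P * (N+1) * (B+1) * 2 / δ), lt_of_lt_of_le one_lt_two (le_max_left _ _),
    ?_⟩
  set R₀ : ℝ := max 2 (M * P * (N+1) * (B+1) * 2 / δ) with hR₀def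
  have hR₀2 : (2:ℝ) ≤ R₀ := le_max_left _ _
  have hR₀0 : (0:ℝ) < R₀ := lt_of_lt_of_le two_pos hR₀2
  have hR₀1 : (1:ℝ) ≤ R₀ := by linarith
  intro τ hτ0 hττ₁ x hx
  have hx1 : (1:ℝ) ≤ ‖x‖ := le_trans hR₀1 hx
  by_cases hFi : Integrable (fun z : EuclideanSpace ℝ (Fin N) => J z *
      ((‖x‖ ^ (N + 1) - ‖x + z‖ ^ (N + 1)) / (1 + τ * ‖x + z‖ ^ (N + 1)))
      * (φ (x + z) / φ x))
  swap
  · rw [integral_undef hFi, mul_zero]; exact hδ.le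
  -- integrable majorant
  have hg : Integrable (fun z : EuclideanSpace ℝ (Fin N) =>
      (M*(τ*P)) * (J z * ‖z‖^(N+1)) + (M*(P*((N:ℝ)+1)/R₀)) * (J z * ‖z‖)) :=
    (hJmom.const_mul _).add (hB.const_mul _)
  have hle : ∀ z : EuclideanSpace ℝ (Fin N), τ * (J z *
      ((‖x‖ ^ (N + 1) - ‖x + z‖ ^ (N + 1)) / (1 + τ * ‖x + z‖ ^ (N + 1)))
      * (φ (x + z) / φ x)) ≤
      (M*(τ*P)) * (J z * ‖z‖^(N+1)) + (M*(P*((N:ℝ)+1)/R₀)) * (J z * ‖z‖) := by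
    intro z
    have hr : (0:ℝ) ≤ ‖z‖ := norm_nonneg z
    have hb : (0:ℝ) ≤ ‖x+z‖ := norm_nonneg _
    have htri : ‖x‖ - ‖z‖ ≤ ‖x+z‖ := by
      have h := norm_add_le (x+z) (-z)
      simp only [add_neg_cancel_right, norm_neg] at h
      linarith
    have hkey := key_ineq N τ ‖x‖ ‖x+z‖ ‖z‖ hτ0 hr hb htri hx1
    have h2 : 2^(N+1) * ((N:ℝ)+1) * ‖z‖ / ‖x‖ ≤ 2^(N+1) * ((N:ℝ)+1) * ‖z‖ / R₀ := by
      gcongr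
    set D := (‖x‖ ^ (N + 1) - ‖x + z‖ ^ (N + 1)) / (1 + τ * ‖x + z‖ ^ (N + 1)) with hDdef
    set ρ := φ (x + z) / φ x with hρdef
    have hDb : τ * D ≤ τ*2^(N+1)*‖z‖^(N+1) + 2^(N+1)*((N:ℝ)+1)*‖z‖/R₀ := by
      push_cast at hkey
      linarith
    have hρ0 : 0 ≤ ρ := div_nonneg (le_trans hc0.le (hcφ _)) (le_trans hc0.le (hcφ _))
    have hρM : ρ ≤ M := div_le_div₀ hCb0.le (hCb _) hc0 (hcφ x)
    have hJz := hJpos z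
    have hbnd0 : (0:ℝ) ≤ τ*2^(N+1)*‖z‖^(N+1) + 2^(N+1)*((N:ℝ)+1)*‖z‖/R₀ := by positivity
    have step1 : τ * (J z * D * ρ) = (J z * ρ) * (τ * D) := by ring
    have hJρ : 0 ≤ J z * ρ := mul_nonneg hJz hρ0
    have step2 : (J z * ρ) * (τ * D) ≤ (J z * ρ) *
        (τ*2^(N+1)*‖z‖^(N+1) + 2^(N+1)*((N:ℝ)+1)*‖z‖/R₀) :=
      mul_le_mul_of_nonneg_left hDb hJρ
    have step3 : (J z * ρ) * (τ*2^(N+1)*‖z‖^(N+1) + 2^(N+1)*((N:ℝ)+1)*‖z‖/R₀) ≤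
        (J z * M) * (τ*2^(N+1)*‖z‖^(N+1) + 2^(N+1)*((N:ℝ)+1)*‖z‖/R₀) :=
      mul_le_mul_of_nonneg_right (mul_le_mul_of_nonneg_left hρM hJz) hbnd0
    have hfin : (J z * M) * (τ*2^(N+1)*‖z‖^(N+1) + 2^(N+1)*((N:ℝ)+1)*‖z‖/R₀) =
        (M*(τ*P)) * (J z * ‖z‖^(N+1)) + (M*(P*((N:ℝ)+1)/R₀)) * (J z * ‖z‖) := by
      rw [hPdef]; ring
    calc τ * (J z * D * ρ) = (J z * ρ) * (τ * D) := step1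
      _ ≤ (J z * M) * (τ*2^(N+1)*‖z‖^(N+1) + 2^(N+1)*((N:ℝ)+1)*‖z‖/R₀) := le_trans step2 step3
      _ = _ := hfin
  have hτm : τ * (M * P * (A+1) * 2) ≤ δ :=
    (le_div_iff₀ (by positivity)).mp hττ₁
  have hQ : M * P * ((N:ℝ)+1) * (B+1) * 2 / δ ≤ R₀ := le_max_right _ _
  calc τ * ∫ z, J z *
          ((‖x‖ ^ (N + 1) - ‖x + z‖ ^ (N + 1)) / (1 + τ * ‖x + z‖ ^ (N + 1)))
          * (φ (x + z) / φ x)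
      = ∫ z, τ * (J z *
          ((‖x‖ ^ (N + 1) - ‖x + z‖ ^ (N + 1)) / (1 + τ * ‖x + z‖ ^ (N + 1)))
          * (φ (x + z) / φ x)) := (integral_const_mul τ _).symm
    _ ≤ ∫ z, ((M*(τ*P)) * (J z * ‖z‖^(N+1)) + (M*(P*((N:ℝ)+1)/R₀)) * (J z * ‖z‖)) :=
        integral_mono (hFi.const_mul τ) hg hle
    _ = (M*(τ*P)) * A + (M*(P*((N:ℝ)+1)/R₀)) * B := by
        rw [integral_add (hJmom.const_mul _) (hB.const_mul _), integral_const_mul,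
          integral_const_mul]
    _ ≤ δ := by
        have h1 : (M*(τ*P)) * A ≤ δ/2 := by nlinarith [mul_nonneg (mul_nonneg hM0.le hτ0.le) hP0.le]
        have h2 : (M*(P*((N:ℝ)+1)/R₀)) * B ≤ δ/2 := by
          have hδR := mul_le_mul_of_nonneg_left hQ hδ.le
          have hδQ : δ * (M * P * ((N:ℝ)+1) * (B+1) * 2 / δ) = M * P * ((N:ℝ)+1) * (B+1) * 2 := by
            field_simp
          rw [hδQ] at hδR
          rw [show (M*(P*((N:ℝ)+1)/R₀)) * B = M*P*((N:ℝ)+1)*B/R₀ by ring,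
            div_le_iff₀ hR₀0]
          have hN0 : (0:ℝ) ≤ M*P*((N:ℝ)+1) := by positivity
          nlinarith
        linarith

end
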